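/- The number D_1 = 3 + ζ² + ζ³ + ζ¹⁰ + ζ¹¹, with ζ = exp(2πi/13), is a real number, and it is a root of the cubic polynomial x³ − 8x² + 17x − 5 (equivalently, D_1 = 8/3 + (2/3)·Re((13/2)(−5 − 3i√3))^{1/3}). In particular D_1 ∈ Q(ζ₁₃). -/

import Mathlib

open Complex

/-- The Jones index of the extended Haagerup subfactor,
`D₁ = 3 + ζ² + ζ³ + ζ¹⁰ + ζ¹¹` with `ζ = exp(2πi/13)`. -/
noncomputable def D1 : ℂ :=
  3 + Complex.exp (2 * Real.pi * Complex.I / 13) ^ 2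
    + Complex.exp (2 * Real.pi * Complex.I / 13) ^ 3
    + Complex.exp (2 * Real.pi * Complex.I / 13) ^ 10
    + Complex.exp (2 * Real.pi * Complex.I / 13) ^ 11

theorem D1_real_and_root_of_cubic :
    D1.im = 0 ∧
    D1 ^ 3 - 8 * D1 ^ 2 + 17 * D1 - 5 = 0 ∧
    D1 ∈ IntermediateField.adjoin ℚ
        ({Complex.exp (2 * Real.pi * Complex.I / 13)} : Set ℂ) := by
  set z : ℂ := Complex.exp (2 * Real.pi * Complex.I / 13) with hz
  have h1 : z ^ 13 = 1 := by
    rw [hz, ← Complex.exp_nat_mul]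
    have : ((13 : ℕ) : ℂ) * (2 * Real.pi * Complex.I / 13) = 2 * Real.pi * Complex.I := by
      push_cast
      field_simp
    rw [this, Complex.exp_two_pi_mul_I]
  have hne : z ≠ 1 := by
    rw [hz]
    intro h
    rw [Complex.exp_eq_one_iff] at h
    obtain ⟨n, hn⟩ := h
    have hpi : (Real.pi : ℂ) ≠ 0 := by
      exact_mod_cast Real.pi_ne_zero
    have hI : Complex.I ≠ 0 := Complex.I_ne_zero
    have h2 : (2 : ℂ) * Real.pi * Complex.I ≠ 0 :=
      mul_ne_zero (mul_ne_zero two_ne_zero hpi) hI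
    have key : ((n : ℂ) * 13 - 1) * (2 * Real.pi * Complex.I) = 0 := by
      field_simp at hn
      linear_combination (-(2 * (Real.pi : ℂ) * Complex.I)) * hn
    rcases mul_eq_zero.mp key with h | h
    · have : (n : ℂ) * 13 = 1 := by linear_combination h
      have hn' : (n * 13 : ℤ) = 1 := by exact_mod_cast this
      omega
    · exact h2 h
  have hs : 1 + z + z^2 + z^3 + z^4 + z^5 + z^6 + z^7 + z^8 + z^9 + z^10 + z^11 + z^12 = 0 := by
    have hz1 : z - 1 ≠ 0 := sub_ne_zero.mpr hne
    have : (z - 1) * (1 + z + z^2 + z^3 + z^4 + z^5 + z^6 + z^7 + z^8 + z^9 + z^10 + z^11 + z^12) = 0 := by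
      linear_combination h1
    rcases mul_eq_zero.mp this with h | h
    · exact absurd h hz1
    · exact h
  have hD : D1 = 3 + z^2 + z^3 + z^10 + z^11 := by rw [D1]
  refine ⟨?_, ?_, ?_⟩
  · -- imaginary part is zero
    have hconj : (starRingEnd ℂ) z = z ^ 12 := by
      have hc : (starRingEnd ℂ) z = Complex.exp (-(2 * Real.pi * Complex.I / 13)) := by
        rw [hz, ← Complex.exp_conj]
        congr 1
        simp [map_div₀, Complex.conj_I, map_ofNat]
        ring
      have hzne : z ≠ 0 := by rw [hz]; exact Complex.exp_ne_zero _
      have h12 : z ^ 12 * z = 1 := by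
        calc z ^ 12 * z = z ^ 13 := by ring
        _ = 1 := h1
      have hinv : Complex.exp (-(2 * Real.pi * Complex.I / 13)) * z = 1 := by
        rw [hz, ← Complex.exp_add]
        simp
      rw [hc]
      exact (mul_right_cancel₀ hzne (h12.trans hinv.symm)).symm
    have : (starRingEnd ℂ) D1 = D1 := by
      rw [hD]
      simp only [map_add, map_pow, hconj, map_ofNat]
      linear_combination (z^11 + z^23 + z^10 + z^107+z^94+z^81+z^68+z^55+z^42+z^29+z^16+z^3 + z^119+z^106+z^93+z^80+z^67+z^54+z^41+z^28+z^15+z^2) * h1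
    exact Complex.conj_eq_iff_im.mp this
  · rw [hD]
    linear_combination (4 + 5*z + 9*z^2 + 9*z^3 + 4*z^4 + 3*z^5 + 3*z^6 + 2*z^7 + 2*z^8 + 4*z^9 + 9*z^10 + 9*z^11 + 3*z^12 + z^17 + 3*z^18 + 3*z^19 + z^20) * h1 + 5 * hs
  · have hzmem : z ∈ IntermediateField.adjoin ℚ ({z} : Set ℂ) :=
      IntermediateField.subset_adjoin ℚ _ rfl
    rw [hD]
    set K := IntermediateField.adjoin ℚ ({z} : Set ℂ)
    have h3 : (3 : ℂ) ∈ K := by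
      have := IntermediateField.algebraMap_mem K (3 : ℚ)
      simpa using this
    exact add_mem (add_mem (add_mem (add_mem h3 (pow_mem hzmem 2)) (pow_mem hzmem 3)) (pow_mem hzmem 10)) (pow_mem hzmem 11)
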